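/- Let A be a noncyclic abelian group of automorphisms of a finite nilpotent group G with gcd(|G|, |A|) = 1. Then G is the product of the centralizers C_G(a) over all nontrivial elements a of A: G = ∏_{a ∈ A, a ≠ 1} C_G(a). -/

import Mathlib

set_option linter.unusedSectionVars false
set_option maxHeartbeats 1000000

open scoped IsMulCommutative

/-- The fixed-point subgroup of a single automorphism. -/
def autFixed {G : Type*} [Group G] (f : MulAut G) : Subgroup G where
  carrier := {g | f g = g}
  one_mem' := map_one f
  mul_mem' := by intro a b ha hb; simp only [Set.mem_setOf_eq, map_mul] at *; rw [ha, hb]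
  inv_mem' := by intro a ha; simp only [Set.mem_setOf_eq, map_inv] at *; rw [ha]

lemma mem_autFixed {G : Type*} [Group G] {f : MulAut G} {x : G} :
    x ∈ autFixed f ↔ f x = x := Iff.rfl

section Aux

variable {A : Type*} [CommGroup A] [Finite A] {G : Type*} [Group G]

lemma center_map_eq (f : MulAut G) :
    (Subgroup.center G).map f.toMonoidHom = Subgroup.center G :=
  Subgroup.characteristic_iff_map_eq.mp inferInstance f

lemma center_mem_map (f : MulAut G) {z : G} (h : z ∈ Subgroup.center G) :
    f z ∈ Subgroup.center G := by
  rw [← center_map_eq f]; exact Subgroup.mem_map_of_mem _ h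

/-- restriction of an automorphism to the center -/
def ctrRes (f : MulAut G) : Subgroup.center G →* Subgroup.center G where
  toFun z := ⟨f z, center_mem_map f z.2⟩
  map_one' := by ext; simp
  map_mul' x y := by ext; simp

@[simp] lemma ctrRes_coe (f : MulAut G) (z : Subgroup.center G) :
    (ctrRes f z : G) = f z := rfl

/-- The subgroup of elements expressible as products of fixed points. -/
def goodSubgroup (φ : A →* MulAut G) : Subgroup G where
  carrier := {g | ∃ l : List G,
      (∀ x ∈ l, ∃ a : A, a ≠ 1 ∧ x ∈ autFixed (φ a)) ∧ l.prod = g}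
  one_mem' := ⟨[], by simp, rfl⟩
  mul_mem' := by
    rintro x y ⟨l1, h1, rfl⟩ ⟨l2, h2, rfl⟩
    refine ⟨l1 ++ l2, ?_, List.prod_append⟩
    intro x hx
    rcases List.mem_append.mp hx with h | h
    exacts [h1 x h, h2 x h]
  inv_mem' := by
    rintro x ⟨l, h, rfl⟩
    show ∃ l' : List G, _
    refine ⟨(l.map fun y => y⁻¹).reverse, ?_, (List.prod_inv_reverse l).symm⟩
    intro x hx
    rw [List.mem_reverse, List.mem_map] at hx
    obtain ⟨y, hy, rfl⟩ := hx
    obtain ⟨a, ha, hf⟩ := h y hy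
    exact ⟨a, ha, inv_mem hf⟩

lemma mem_good_of_fixed {φ : A →* MulAut G} {x : G} {a : A} (ha : a ≠ 1)
    (hx : x ∈ autFixed (φ a)) : x ∈ goodSubgroup φ :=
  ⟨[x], by simpa using ⟨a, ha, hx⟩, by simp⟩

/-- Lifting a fixed point of the quotient by the center to a genuine fixed point. -/
lemma lift_fixed [Finite G] (φ : A →* MulAut G)
    (hcop : Nat.Coprime (Nat.card G) (Nat.card A)) (a : A) (g : G)
    (hg : g⁻¹ * φ a g ∈ Subgroup.center G) :
    ∃ z : Subgroup.center G, φ a (g * z) = g * z := by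
  rcases eq_or_lt_of_le (Nat.one_le_iff_ne_zero.mpr (Nat.card_pos (α := G)).ne') with hG1 | hG1
  · haveI : Subsingleton G := Nat.card_eq_one_iff_unique.mp hG1.symm |>.1
    exact ⟨1, Subsingleton.elim _ _⟩
  set m := Nat.card A with hm
  set ν : ℕ → G := fun k => g⁻¹ * φ (a ^ k) g with hν
  have hφg : ∀ k : ℕ, φ (a ^ k) g = g * ν k := by
    intro k; simp [hν, mul_inv_cancel_left]
  have hφag : φ a g = g * ν 1 := by
    have := hφg 1; rwa [pow_one] at this
  have hν0 : ν 0 = 1 := by simp [hν]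
  have hνm : ν m = 1 := by
    have ham : a ^ m = 1 := pow_card_eq_one'
    show g⁻¹ * φ (a ^ m) g = 1
    rw [ham, map_one]
    simp
  have hνsucc : ∀ k, ν (k + 1) = ν 1 * φ a (ν k) := by
    intro k
    show g⁻¹ * φ (a ^ (k + 1)) g = _
    rw [pow_succ', map_mul, MulAut.mul_apply, hφg k, map_mul, hφag]
    group
  have hg1 : ν 1 ∈ Subgroup.center G := by
    have : ν 1 = g⁻¹ * φ a g := by simp [hν]
    rw [this]; exact hg
  have hmem : ∀ k, ν k ∈ Subgroup.center G := by
    intro k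
    induction k with
    | zero => rw [hν0]; exact one_mem _
    | succ k ih => rw [hνsucc k]; exact mul_mem hg1 (center_mem_map _ ih)
  set ν' : ℕ → Subgroup.center G := fun k => ⟨ν k, hmem k⟩ with hν'
  set ψ : Subgroup.center G →* Subgroup.center G := ctrRes (φ a) with hψ
  have hν'succ : ∀ k, ν' (k + 1) = ν' 1 * ψ (ν' k) := by
    intro k; ext; simp [hν', hψ, hνsucc k]
  set c : Subgroup.center G := ∏ k ∈ Finset.range m, ν' k with hc
  have hψc : ψ c = (ν' 1)⁻¹ ^ m * c := by
    rw [hc, map_prod]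
    have : ∀ k ∈ Finset.range m, ψ (ν' k) = (ν' 1)⁻¹ * ν' (k + 1) := by
      intro k _; rw [hν'succ k]; group
    rw [Finset.prod_congr rfl this, Finset.prod_mul_distrib, Finset.prod_const,
      Finset.card_range]
    congr 1
    have h1 : ∏ k ∈ Finset.range (m + 1), ν' k
        = (∏ k ∈ Finset.range m, ν' (k + 1)) * ν' 0 := Finset.prod_range_succ' _ _
    have h2 : ∏ k ∈ Finset.range (m + 1), ν' k = (∏ k ∈ Finset.range m, ν' k) * ν' m :=
      Finset.prod_range_succ _ _
    have hm1 : ν' m = 1 := by ext; simp [hν', hνm]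
    have h01 : ν' 0 = 1 := by ext; simp [hν', hν0]
    rw [hm1, mul_one] at h2
    rw [h01, mul_one] at h1
    rw [← h1, h2]
  obtain ⟨u, -, hu⟩ := Nat.exists_mul_mod_eq_one_of_coprime hcop.symm hG1
  have hmod : m * u ≡ 1 [MOD Nat.card G] := by
    unfold Nat.ModEq
    rw [hu, Nat.one_mod_eq_one.mpr hG1.ne']
  refine ⟨c ^ u, ?_⟩
  have hn'pow : (ν' 1) ^ (m * u) = ν' 1 := by
    have hdvd : orderOf (ν' 1) ∣ Nat.card G :=
      (orderOf_dvd_natCard _).trans (Subgroup.card_subgroup_dvd_card _)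
    have := hmod.of_dvd hdvd
    calc (ν' 1) ^ (m * u) = (ν' 1) ^ 1 := pow_eq_pow_iff_modEq.mpr this
    _ = ν' 1 := pow_one _
  have hψt : ψ (c ^ u) = c ^ u * (ν' 1)⁻¹ := by
    rw [map_pow, hψc, mul_pow, ← pow_mul, inv_pow, hn'pow, mul_comm]
  set w : G := ((c ^ u : Subgroup.center G) : G) with hw
  have hcoe : φ a w = w * (ν 1)⁻¹ := by
    have := congrArg Subtype.val hψt
    simpa [hψ, hν', hw] using this
  have hcomm : ν 1 * (w * (ν 1)⁻¹) = w := by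
    have h := Subgroup.mem_center_iff.mp hg1 w
    rw [← mul_assoc, ← h, mul_assoc, mul_inv_cancel, mul_one]
  show φ a (g * w) = g * w
  rw [map_mul, hφag, hcoe, mul_assoc, hcomm]

lemma center_mem_good [Finite G] (φ : A →* MulAut G) (q : ℕ) (hq : q.Prime)
    (hqG : Nat.Coprime q (Nat.card G)) (ε : ZMod q × ZMod q → A)
    (hεadd : ∀ v w, ε (v + w) = ε v * ε w) (hε0 : ∀ v, ε v = 1 → v = 0)
    {z : G} (hz : z ∈ Subgroup.center G) : z ∈ goodSubgroup φ := by
  haveI : Fact q.Prime := ⟨hq⟩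
  have hε1 : ε 0 = 1 := by
    have h := hεadd 0 0
    rw [add_zero] at h
    have h2 : ε 0 * 1 = ε 0 * ε 0 := by rw [mul_one, ← h]
    exact (mul_left_cancel h2).symm
  have hone : (1 : ZMod q) ≠ 0 := one_ne_zero
  set K : Subgroup (Subgroup.center G) :=
    (goodSubgroup φ).comap (Subgroup.center G).subtype with hK
  set ζ : Subgroup.center G := ⟨z, hz⟩ with hζ
  set f : ZMod q × ZMod q → Subgroup.center G := fun v => ctrRes (φ (ε v)) ζ with hf
  have hcomp : ∀ v w, ctrRes (φ (ε v)) (f w) = f (v + w) := by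
    intro v w
    apply Subtype.ext
    show φ (ε v) (φ (ε w) z) = φ (ε (v + w)) z
    rw [hεadd, map_mul, MulAut.mul_apply]
  have hfcoe : ∀ (v₀ : ZMod q × ZMod q) (w : Subgroup.center G),
      ctrRes (φ (ε v₀)) w = w → (w : G) ∈ autFixed (φ (ε v₀)) := by
    intro v₀ w h
    show φ (ε v₀) (w : G) = w
    exact congrArg Subtype.val h
  set L : ZMod q → Subgroup.center G := fun c => ∏ t : ZMod q, f (t, c * t) with hL
  set Linf : Subgroup.center G := ∏ t : ZMod q, f (0, t) with hLinf
  set N : Subgroup.center G := ∏ v : ZMod q × ZMod q, f v with hN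
  -- membership in K
  have hne : ∀ v : ZMod q × ZMod q, v ≠ 0 → ε v ≠ 1 := by
    intro v hv h
    exact hv (hε0 v h)
  have hLK : ∀ c : ZMod q, L c ∈ K := by
    intro c
    have hfix : ctrRes (φ (ε (1, c))) (L c) = L c := by
      rw [hL]
      simp only [map_prod]
      rw [Finset.prod_congr rfl fun t _ => hcomp (1, c) (t, c * t)]
      exact Fintype.prod_equiv (Equiv.addRight (1 : ZMod q)) _ _
        (fun t => by rw [Equiv.coe_addRight, Prod.mk_add_mk]; ring_nf)
    exact mem_good_of_fixed (hne (1, c) (by simp [Prod.ext_iff, hone])) (hfcoe _ _ hfix)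
  have hLinfK : Linf ∈ K := by
    have hfix : ctrRes (φ (ε (0, 1))) Linf = Linf := by
      rw [hLinf]
      simp only [map_prod]
      rw [Finset.prod_congr rfl fun t _ => hcomp (0, 1) (0, t)]
      exact Fintype.prod_equiv (Equiv.addRight (1 : ZMod q)) _ _
        (fun t => by rw [Equiv.coe_addRight, Prod.mk_add_mk, zero_add, add_comm])
    exact mem_good_of_fixed (hne (0, 1) (by simp [Prod.ext_iff, hone])) (hfcoe _ _ hfix)
  have hNK : N ∈ K := by
    have hfix : ctrRes (φ (ε (0, 1))) N = N := by
      rw [hN]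
      simp only [map_prod]
      rw [Finset.prod_congr rfl fun v _ => hcomp (0, 1) v]
      exact Fintype.prod_equiv (Equiv.addLeft ((0, 1) : ZMod q × ZMod q)) _ _
        (fun v => by rw [Equiv.coe_addLeft])
    exact mem_good_of_fixed (hne (0, 1) (by simp [Prod.ext_iff, hone])) (hfcoe _ _ hfix)
  -- the identity
  have hf00 : f ((0 : ZMod q), (0 : ZMod q)) = ζ := by
    apply Subtype.ext
    show φ (ε 0) z = z
    rw [hε1, map_one]
    rfl
  have hsplit : ∀ c : ZMod q, L c = ζ * ∏ t ∈ Finset.univ.erase 0, f (t, c * t) := by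
    intro c
    show ∏ t : ZMod q, f (t, c * t) = _
    rw [← Finset.mul_prod_erase Finset.univ _ (Finset.mem_univ (0 : ZMod q))]
    congr 1
    rw [mul_zero, hf00]
  have h1 : ∏ c : ZMod q, L c
      = ζ ^ q * ∏ c : ZMod q, ∏ t ∈ Finset.univ.erase 0, f (t, c * t) := by
    rw [Finset.prod_congr rfl fun c _ => hsplit c, Finset.prod_mul_distrib,
      Finset.prod_const, Finset.card_univ, ZMod.card]
  have h2 : ∏ c : ZMod q, ∏ t ∈ Finset.univ.erase 0, f (t, c * t)
      = ∏ v ∈ Finset.univ.filter (fun v : ZMod q × ZMod q => v.1 ≠ 0), f v := by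
    rw [← Finset.prod_product' (f := fun c t => f (t, c * t))]
    apply Finset.prod_nbij (fun p => (p.2, p.1 * p.2))
    · intro p hp
      rw [Finset.mem_product, Finset.mem_erase] at hp
      simp only [Finset.mem_filter, Finset.mem_univ, true_and]
      exact hp.2.1
    · intro p hp p' hp' hpeq
      rw [Finset.mem_coe, Finset.mem_product, Finset.mem_erase] at hp hp'
      rw [Prod.ext_iff] at hpeq
      obtain ⟨he1, he2⟩ := hpeq
      dsimp at he1 he2
      have : p.1 = p'.1 := by
        rw [← he1] at he2
        exact mul_right_cancel₀ hp.2.1 he2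
      exact Prod.ext this he1
    · intro v hv
      rw [Finset.coe_filter] at hv
      obtain ⟨-, hv1⟩ := hv
      refine ⟨(v.2 * v.1⁻¹, v.1), ?_, ?_⟩
      · rw [Finset.mem_coe, Finset.mem_product, Finset.mem_erase]
        exact ⟨Finset.mem_univ _, hv1, Finset.mem_univ _⟩
      · dsimp
        rw [mul_assoc, inv_mul_cancel₀ hv1, mul_one]
    · intro p hp
      rfl
  have h3 : Linf = ∏ v ∈ Finset.univ.filter (fun v : ZMod q × ZMod q => v.1 = 0), f v := by
    rw [hLinf]
    apply Finset.prod_nbij (fun t => ((0 : ZMod q), t))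
    · intro t _
      simp
    · intro t _ t' _ h
      rw [Prod.ext_iff] at h
      exact h.2
    · intro v hv
      rw [Finset.coe_filter] at hv
      obtain ⟨-, hv1⟩ := hv
      exact ⟨v.2, Finset.mem_coe.mpr (Finset.mem_univ _), by rw [← hv1]⟩
    · intro t _
      rfl
  have h4 : (∏ v ∈ Finset.univ.filter (fun v : ZMod q × ZMod q => v.1 ≠ 0), f v)
      * (∏ v ∈ Finset.univ.filter (fun v : ZMod q × ZMod q => v.1 = 0), f v) = N := by
    rw [hN, ← Finset.prod_filter_mul_prod_filter_not Finset.univ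
      (fun v : ZMod q × ZMod q => v.1 ≠ 0) f]
    congr 2
    ext v
    simp [not_not]
  have hkey : (∏ c : ZMod q, L c) * Linf = ζ ^ q * N := by
    rw [h1, h2, h3, mul_assoc, h4]
  have hζq : ζ ^ q ∈ K := by
    have : ζ ^ q = ((∏ c : ZMod q, L c) * Linf) * N⁻¹ := by
      rw [hkey, mul_inv_cancel_right]
    rw [this]
    exact mul_mem (mul_mem (prod_mem fun c _ => hLK c) hLinfK) (inv_mem hNK)
  -- transfer to G and take a power
  have hzq : z ^ q ∈ goodSubgroup φ := by
    have := hζq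
    rw [hK, Subgroup.mem_comap] at this
    simpa [hζ] using this
  rcases eq_or_ne (orderOf z) 1 with hord | hord
  · rw [orderOf_eq_one_iff.mp hord]
    exact one_mem _
  · have hordpos : 0 < orderOf z := by
      have : IsOfFinOrder z := isOfFinOrder_of_finite z
      exact this.orderOf_pos
    have hcop : Nat.Coprime q (orderOf z) :=
      Nat.Coprime.coprime_dvd_right (orderOf_dvd_natCard z) hqG
    obtain ⟨u, -, hu⟩ := Nat.exists_mul_mod_eq_one_of_coprime hcop (by omega)
    have : z = (z ^ q) ^ u := by
      rw [← pow_mul, ← pow_mod_orderOf, hu, pow_one]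
    rw [this]
    exact pow_mem hzq u

lemma goodSubgroup_def (φ : A →* MulAut G) (g : G) : g ∈ goodSubgroup φ ↔ ∃ l : List G,
      (∀ x ∈ l, ∃ a : A, a ≠ 1 ∧ x ∈ autFixed (φ a)) ∧ l.prod = g := Iff.rfl

/-- The action induced on the quotient by the center. -/
def quotAut (φ : A →* MulAut G) : A →* MulAut (G ⧸ Subgroup.center G) where
  toFun a := QuotientGroup.congr (Subgroup.center G) (Subgroup.center G) (φ a)
    (center_map_eq (φ a))
  map_one' := by
    refine MulEquiv.ext fun x => ?_
    induction x using QuotientGroup.induction_on with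
    | H x => simp [QuotientGroup.congr_mk]
  map_mul' a b := by
    refine MulEquiv.ext fun x => ?_
    induction x using QuotientGroup.induction_on with
    | H x => simp [QuotientGroup.congr_mk, MulAut.mul_apply]; rfl

lemma quotAut_mk (φ : A →* MulAut G) (a : A) (x : G) :
    quotAut φ a (QuotientGroup.mk x) = QuotientGroup.mk (φ a x) :=
  QuotientGroup.congr_mk _ _ (φ a) (center_map_eq (φ a)) x

lemma main_good (q : ℕ) (hq : q.Prime) (hqA : q ∣ Nat.card A)
    (ε : ZMod q × ZMod q → A) (hεadd : ∀ v w, ε (v + w) = ε v * ε w)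
    (hε0 : ∀ v, ε v = 1 → v = 0) (G : Type*) [Group G] [Group.IsNilpotent G] :
    ∀ (_ : Finite G) (φ : A →* MulAut G),
      Nat.Coprime (Nat.card G) (Nat.card A) → ∀ g : G, g ∈ goodSubgroup φ := by
  refine nilpotent_center_quotient_ind
    (P := fun G _ _ => ∀ (_ : Finite G) (φ : A →* MulAut G),
      Nat.Coprime (Nat.card G) (Nat.card A) → ∀ g : G, g ∈ goodSubgroup φ)
    G ?_ ?_
  · intro G _ _ _ φ _ g
    have : g = 1 := Subsingleton.elim _ _
    rw [this]
    exact one_mem _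
  · intro G _ _ IH hFin φ hcop g
    haveI : Finite G := hFin
    have hcop' : Nat.Coprime (Nat.card (G ⧸ Subgroup.center G)) (Nat.card A) :=
      Nat.Coprime.coprime_dvd_left (Subgroup.card_quotient_dvd_card _) hcop
    obtain ⟨l', hl', hprod⟩ := (goodSubgroup_def _ _).mp
      (IH inferInstance (quotAut φ) hcop' (QuotientGroup.mk g))
    have hlift : ∀ (l' : List (G ⧸ Subgroup.center G)),
        (∀ y ∈ l', ∃ a : A, a ≠ 1 ∧ y ∈ autFixed (quotAut φ a)) →
        ∃ lg : List G, (∀ x ∈ lg, ∃ a : A, a ≠ 1 ∧ x ∈ autFixed (φ a)) ∧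
          (QuotientGroup.mk lg.prod : G ⧸ Subgroup.center G) = l'.prod := by
      intro l'
      induction l' with
      | nil => intro _; exact ⟨[], by simp, by simp⟩
      | cons y l'' ihl =>
        intro hmem
        obtain ⟨lg'', h1, h2⟩ := ihl (fun x hx => hmem x (List.mem_cons_of_mem _ hx))
        obtain ⟨a, ha1, hafix⟩ := hmem y List.mem_cons_self
        obtain ⟨x, rfl⟩ := QuotientGroup.mk_surjective y
        have hcenterm : x⁻¹ * φ a x ∈ Subgroup.center G := by
          rw [mem_autFixed, quotAut_mk] at hafix
          have := QuotientGroup.eq.mp hafix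
          have h' := inv_mem this
          rwa [mul_inv_rev, inv_inv] at h'
        obtain ⟨zc, hzc⟩ := lift_fixed φ hcop a x hcenterm
        refine ⟨(x * zc) :: lg'', ?_, ?_⟩
        · intro w hw
          rcases List.mem_cons.mp hw with rfl | hw
          · exact ⟨a, ha1, hzc⟩
          · exact h1 w hw
        · rw [List.prod_cons, List.prod_cons, QuotientGroup.mk_mul, h2]
          congr 1
          rw [QuotientGroup.eq]
          have hx : (x * (zc : G))⁻¹ * x = (zc : G)⁻¹ := by group
          rw [hx]
          exact inv_mem zc.2
    obtain ⟨lg, h1, h2⟩ := hlift l' hl'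
    rw [hprod] at h2
    have hz0 : lg.prod⁻¹ * g ∈ Subgroup.center G := QuotientGroup.eq.mp h2
    have hgeq : g = lg.prod * (lg.prod⁻¹ * g) := by group
    rw [hgeq]
    have hqG : Nat.Coprime q (Nat.card G) := (hcop.coprime_dvd_right hqA).symm
    exact mul_mem ((goodSubgroup_def _ _).mpr ⟨lg, h1, rfl⟩)
      (center_mem_good φ q hq hqG ε hεadd hε0 hz0)

end Aux

section Cyclic

variable {A : Type*} [CommGroup A] [Finite A]

lemma card_pow_eq_one_le (h : ∀ p : ℕ, p.Prime → Nat.card {x : A // x ^ p = 1} ≤ p) :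
    ∀ n : ℕ, 0 < n → Nat.card {x : A // x ^ n = 1} ≤ n := by
  intro n
  induction n using Nat.strong_induction_on with
  | _ n ih =>
  intro hn
  rcases eq_or_lt_of_le (show 1 ≤ n from hn) with h1 | h1
  · haveI : Subsingleton {x : A // x ^ n = 1} := by
      constructor
      rintro ⟨x, hx⟩ ⟨y, hy⟩
      rw [← h1, pow_one] at hx hy
      simp [hx, hy]
    calc Nat.card {x : A // x ^ n = 1} ≤ 1 := Finite.card_le_one_iff_subsingleton.mpr this
    _ = n := h1
  · set p := n.minFac with hp
    have hpp : p.Prime := Nat.minFac_prime (by omega)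
    set d := n / p with hd
    have hpd : p * d = n := Nat.mul_div_cancel' (Nat.minFac_dvd n)
    have hd0 : 0 < d := by
      rcases Nat.eq_zero_or_pos d with h0 | h0
      · rw [h0, mul_zero] at hpd; omega
      · exact h0
    have hdn : d < n := by
      have : 1 < p := hpp.one_lt
      nlinarith
    classical
    set r : A → A := fun y => if h : ∃ z : A, z ^ n = 1 ∧ z ^ d = y then h.choose else 1 with hr
    have hrspec : ∀ x : A, x ^ n = 1 → (r (x ^ d)) ^ n = 1 ∧ (r (x ^ d)) ^ d = x ^ d := by
      intro x hx
      have hex : ∃ z : A, z ^ n = 1 ∧ z ^ d = x ^ d := ⟨x, hx, rfl⟩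
      rw [hr]
      simp only [dif_pos hex]
      exact hex.choose_spec
    set Ψ : {x : A // x ^ n = 1} → {y : A // y ^ p = 1} × {s : A // s ^ d = 1} :=
      fun x => (⟨x.1 ^ d, by rw [← pow_mul, mul_comm, hpd]; exact x.2⟩,
        ⟨x.1 * (r (x.1 ^ d))⁻¹, by
          rw [mul_pow, inv_pow, (hrspec x.1 x.2).2, mul_inv_cancel]⟩) with hΨ
    have hinj : Function.Injective Ψ := by
      intro x y hxy
      rw [hΨ, Prod.ext_iff] at hxy
      obtain ⟨h1', h2'⟩ := hxy
      simp only [Subtype.mk.injEq] at h1' h2'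
      have : r (x.1 ^ d) = r (y.1 ^ d) := by rw [h1']
      rw [this] at h2'
      exact Subtype.ext (mul_right_cancel h2')
    calc Nat.card {x : A // x ^ n = 1}
        ≤ Nat.card ({y : A // y ^ p = 1} × {s : A // s ^ d = 1}) :=
          Nat.card_le_card_of_injective Ψ hinj
      _ = Nat.card {y : A // y ^ p = 1} * Nat.card {s : A // s ^ d = 1} := Nat.card_prod _ _
      _ ≤ p * d := Nat.mul_le_mul (h p hpp) (ih d hdn hd0)
      _ = n := hpd

lemma exists_prime_big_torsion (hnc : ¬IsCyclic A) :
    ∃ q : ℕ, q.Prime ∧ q < Nat.card {x : A // x ^ q = 1} := by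
  by_contra hcon
  push_neg at hcon
  apply hnc
  haveI := Fintype.ofFinite A
  classical
  apply isCyclic_of_card_pow_eq_one_le
  intro n hn
  have := card_pow_eq_one_le (fun p hp => hcon p hp) n hn
  rwa [Nat.card_eq_fintype_card, Fintype.card_subtype] at this

lemma exists_indep_pair (hnc : ¬IsCyclic A) :
    ∃ (q : ℕ) (a b : A), q.Prime ∧ q ∣ Nat.card A ∧ a ^ q = 1 ∧ b ^ q = 1 ∧
      (∀ i j : ℕ, i < q → j < q → a ^ i * b ^ j = 1 → i = 0 ∧ j = 0) := by
  obtain ⟨q, hq, hcard⟩ := exists_prime_big_torsion hnc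
  haveI : Finite {x : A // x ^ q = 1} := Subtype.finite
  haveI hnt : Nontrivial {x : A // x ^ q = 1} :=
    Finite.one_lt_card_iff_nontrivial.mp (lt_trans hq.one_lt hcard)
  obtain ⟨⟨a, ha⟩, hane⟩ := exists_ne (⟨1, one_pow q⟩ : {x : A // x ^ q = 1})
  have ha1 : a ≠ 1 := fun h => hane (Subtype.ext h)
  have horda : orderOf a = q := by
    rcases (Nat.Prime.eq_one_or_self_of_dvd hq _ (orderOf_dvd_of_pow_eq_one ha)) with h | h
    · exact absurd (orderOf_eq_one_iff.mp h) ha1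
    · exact h
  have hqA : q ∣ Nat.card A := horda ▸ orderOf_dvd_natCard a
  have hnotall : ¬ ∀ y : A, y ^ q = 1 → y ∈ Subgroup.zpowers a := by
    intro hall
    have hinj : Function.Injective
        (fun y : {x : A // x ^ q = 1} => (⟨y.1, hall y.1 y.2⟩ : Subgroup.zpowers a)) :=
      fun u v huv => Subtype.ext (by simpa using congrArg Subtype.val huv)
    have hle := Nat.card_le_card_of_injective _ hinj
    rw [Nat.card_zpowers, horda] at hle
    omega
  push_neg at hnotall
  obtain ⟨b, hbq, hbz⟩ := hnotall
  have hb1 : b ≠ 1 := fun h => hbz (h ▸ one_mem _)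
  have hordb : orderOf b = q := by
    rcases (Nat.Prime.eq_one_or_self_of_dvd hq _ (orderOf_dvd_of_pow_eq_one hbq)) with h | h
    · exact absurd (orderOf_eq_one_iff.mp h) hb1
    · exact h
  have hkey : ∀ k : ℕ, b ^ k ∈ Subgroup.zpowers a → q ∣ k := by
    intro k hk
    by_contra hndvd
    have hcop : Nat.Coprime k q := (Nat.Prime.coprime_iff_not_dvd hq |>.mpr hndvd).symm
    obtain ⟨s, -, hs⟩ := Nat.exists_mul_mod_eq_one_of_coprime hcop hq.one_lt
    have hb' : b = (b ^ k) ^ s := by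
      rw [← pow_mul, ← pow_mod_orderOf, hordb, hs, pow_one]
    exact hbz (hb' ▸ pow_mem hk s)
  refine ⟨q, a, b, hq, hqA, ha, hbq, ?_⟩
  intro i j hi hj hij
  have hbj : b ^ j ∈ Subgroup.zpowers a := by
    have : b ^ j = (a ^ i)⁻¹ := by
      rw [eq_inv_iff_mul_eq_one, mul_comm]
      exact hij
    rw [this]
    exact inv_mem (pow_mem (Subgroup.mem_zpowers a) i)
  have hj0 : j = 0 := Nat.eq_zero_of_dvd_of_lt (hkey j hbj) hj
  subst hj0
  rw [pow_zero, mul_one] at hij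
  have hi0 : i = 0 :=
    Nat.eq_zero_of_dvd_of_lt (horda ▸ orderOf_dvd_of_pow_eq_one hij) hi
  exact ⟨hi0, rfl⟩

end Cyclic

/-- If a noncyclic abelian `A` acts coprimely on a finite nilpotent `G`, then
`G = ∏_{a ∈ A#} C_G(a)`: every element is a product of elements each fixed by
some nontrivial `a ∈ A`. -/
theorem stmt4 {A G : Type*} [CommGroup A] [Group G] [Finite A] [Finite G]
    [Group.IsNilpotent G] (hnc : ¬IsCyclic A)
    (φ : A →* MulAut G) (hcop : Nat.Coprime (Nat.card G) (Nat.card A)) :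
    ∀ g : G, ∃ l : List G,
      (∀ x ∈ l, ∃ a : A, a ≠ 1 ∧ x ∈ autFixed (φ a)) ∧ l.prod = g := by
  intro g
  obtain ⟨q, a, b, hq, hqA, haq, hbq, hind⟩ := exists_indep_pair hnc
  haveI : NeZero q := ⟨hq.pos.ne'⟩
  set ε : ZMod q × ZMod q → A := fun v => a ^ v.1.val * b ^ v.2.val with hε
  have key : ∀ (x : A), x ^ q = 1 → ∀ s : ℕ, x ^ (s % q) = x ^ s := by
    intro x hx s
    conv_rhs => rw [← Nat.mod_add_div s q]
    rw [pow_add, pow_mul, hx, one_pow, mul_one]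
  have hεadd : ∀ v w, ε (v + w) = ε v * ε w := by
    intro v w
    show a ^ ((v.1 + w.1).val) * b ^ ((v.2 + w.2).val) = _
    rw [ZMod.val_add, ZMod.val_add, key a haq, key b hbq, pow_add, pow_add,
      mul_mul_mul_comm]
  have hε0 : ∀ v, ε v = 1 → v = 0 := by
    intro v hv
    have h := hind v.1.val v.2.val (ZMod.val_lt v.1) (ZMod.val_lt v.2) hv
    have h1 : v.1 = 0 := by
      have := h.1
      rwa [ZMod.val_eq_zero] at this
    have h2 : v.2 = 0 := by
      have := h.2
      rwa [ZMod.val_eq_zero] at this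
    exact Prod.ext h1 h2
  exact (goodSubgroup_def φ g).mp
    (main_good q hq hqA ε hεadd hε0 G inferInstance φ hcop g)
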